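/- If every vertex of a bipartite simple graph has at most k neighbors, then the graph has a proper edge coloring using k colors. -/

import Mathlib

open Finset

/-- Kempe chain reachability: vertices reachable from column `b0` by alternately
following `α`-colored then `β`-colored edges. -/
inductive KReach {A B : Type*} (E : Finset (A × B)) (c : A × B → ℕ) (α β : ℕ) (b0 : B) :
    A ⊕ B → Prop
  | base : KReach E c α β b0 (Sum.inr b0)
  | stepA {a : A} {b : B} : KReach E c α β b0 (Sum.inr b) → (a, b) ∈ E → c (a, b) = α →
      KReach E c α β b0 (Sum.inl a)
  | stepB {a : A} {b : B} : KReach E c α β b0 (Sum.inl a) → (a, b) ∈ E → c (a, b) = β →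
      KReach E c α β b0 (Sum.inr b)

theorem abstract_konig {A B : Type*} [DecidableEq A] [DecidableEq B] {k : ℕ}
    (E : Finset (A × B)) :
    (∀ a, (E.filter (fun p => p.1 = a)).card ≤ k) →
    (∀ b, (E.filter (fun p => p.2 = b)).card ≤ k) →
    ∃ c : A × B → ℕ, (∀ e ∈ E, c e < k) ∧
      ∀ e₁ ∈ E, ∀ e₂ ∈ E, e₁ ≠ e₂ → (e₁.1 = e₂.1 ∨ e₁.2 = e₂.2) → c e₁ ≠ c e₂ := by
  classical
  induction E using Finset.induction_on with
  | empty =>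
    intro _ _
    exact ⟨fun _ => 0, by simp, by simp⟩
  | @insert e0 E hnotmem ih =>
    intro hrow' hcol'
    obtain ⟨a0, b0⟩ := e0
    have hrow : ∀ a, (E.filter (fun p => p.1 = a)).card ≤ k := fun a =>
      le_trans (card_le_card (filter_subset_filter _ (subset_insert _ _))) (hrow' a)
    have hcol : ∀ b, (E.filter (fun p => p.2 = b)).card ≤ k := fun b =>
      le_trans (card_le_card (filter_subset_filter _ (subset_insert _ _))) (hcol' b)
    obtain ⟨c, hlt, hproper⟩ := ih hrow hcol
    -- row a0 uses at most k-1 colors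
    have hrowcard : (E.filter (fun p => p.1 = a0)).card + 1 ≤ k := by
      have h1 : ((insert (a0, b0) E).filter (fun p => p.1 = a0))
          = insert (a0, b0) (E.filter (fun p => p.1 = a0)) := by
        rw [filter_insert]; simp
      have h2 := hrow' a0
      rw [h1, card_insert_of_notMem (fun h => hnotmem (mem_filter.mp h).1)] at h2
      omega
    have hcolcard : (E.filter (fun p => p.2 = b0)).card + 1 ≤ k := by
      have h1 : ((insert (a0, b0) E).filter (fun p => p.2 = b0))
          = insert (a0, b0) (E.filter (fun p => p.2 = b0)) := by
        rw [filter_insert]; simp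
      have h2 := hcol' b0
      rw [h1, card_insert_of_notMem (fun h => hnotmem (mem_filter.mp h).1)] at h2
      omega
    -- pick α missing in row a0
    have hexα : ∃ α, α < k ∧ ∀ e ∈ E, e.1 = a0 → c e ≠ α := by
      have hsub : (E.filter (fun p => p.1 = a0)).image c ⊆ range k := by
        intro x hx
        obtain ⟨p, hp, rfl⟩ := mem_image.mp hx
        exact mem_range.mpr (hlt p (mem_filter.mp hp).1)
      have hcard : ((E.filter (fun p => p.1 = a0)).image c).card < k :=
        lt_of_le_of_lt (card_image_le) (by omega)
      have : (range k \ (E.filter (fun p => p.1 = a0)).image c).Nonempty := by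
        rw [sdiff_nonempty]
        intro hle
        exact absurd (card_le_card hle) (by simp; omega)
      obtain ⟨α, hα⟩ := this
      rw [mem_sdiff, mem_range] at hα
      refine ⟨α, hα.1, fun e he h1 hc => hα.2 ?_⟩
      exact mem_image.mpr ⟨e, mem_filter.mpr ⟨he, h1⟩, hc⟩
    have hexβ : ∃ β, β < k ∧ ∀ e ∈ E, e.2 = b0 → c e ≠ β := by
      have hsub : (E.filter (fun p => p.2 = b0)).image c ⊆ range k := by
        intro x hx
        obtain ⟨p, hp, rfl⟩ := mem_image.mp hx
        exact mem_range.mpr (hlt p (mem_filter.mp hp).1)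
      have hcard : ((E.filter (fun p => p.2 = b0)).image c).card < k :=
        lt_of_le_of_lt (card_image_le) (by omega)
      have : (range k \ (E.filter (fun p => p.2 = b0)).image c).Nonempty := by
        rw [sdiff_nonempty]
        intro hle
        exact absurd (card_le_card hle) (by simp; omega)
      obtain ⟨β, hβ⟩ := this
      rw [mem_sdiff, mem_range] at hβ
      refine ⟨β, hβ.1, fun e he h1 hc => hβ.2 ?_⟩
      exact mem_image.mpr ⟨e, mem_filter.mpr ⟨he, h1⟩, hc⟩
    obtain ⟨α, hαk, hαrow⟩ := hexα
    obtain ⟨β, hβk, hβcol⟩ := hexβ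
    have huniq : ∀ e₁ ∈ E, ∀ e₂ ∈ E, (e₁.1 = e₂.1 ∨ e₁.2 = e₂.2) → c e₁ = c e₂ → e₁ = e₂ := by
      intro e₁ h₁ e₂ h₂ hsh hc
      by_contra hne
      exact hproper e₁ h₁ e₂ h₂ hne hsh hc
    by_cases hcase : ∀ e ∈ E, e.2 = b0 → c e ≠ α
    · -- easy case: α also free at column b0
      refine ⟨fun e => if e = (a0, b0) then α else c e, ?_, ?_⟩
      · intro e he
        dsimp only
        rcases mem_insert.mp he with rfl | he
        · simp [hαk]
        · rw [if_neg (show ¬(e = (a0, b0)) from fun h => hnotmem (h ▸ he))]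
          exact hlt e he
      · intro e₁ he₁ e₂ he₂ hne hsh
        dsimp only
        rcases mem_insert.mp he₁ with rfl | he₁ <;> rcases mem_insert.mp he₂ with rfl | he₂
        · exact absurd rfl hne
        · rw [if_pos rfl, if_neg (show ¬(e₂ = (a0, b0)) from fun h => hnotmem (h ▸ he₂))]
          rcases hsh with h | h
          · exact fun hc => hαrow e₂ he₂ h.symm hc.symm
          · exact fun hc => hcase e₂ he₂ h.symm hc.symm
        · rw [if_pos rfl, if_neg (show ¬(e₁ = (a0, b0)) from fun h => hnotmem (h ▸ he₁))]
          rcases hsh with h | h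
          · exact fun hc => hαrow e₁ he₁ h hc
          · exact fun hc => hcase e₁ he₁ h hc
        · rw [if_neg (show ¬(e₁ = (a0, b0)) from fun h => hnotmem (h ▸ he₁)), if_neg (show ¬(e₂ = (a0, b0)) from fun h => hnotmem (h ▸ he₂))]
          exact hproper e₁ he₁ e₂ he₂ hne hsh
    · -- hard case: α is used at column b0; Kempe swap
      push_neg at hcase
      obtain ⟨ew, hew, hewb, hewα⟩ := hcase
      have hαβ : α ≠ β := fun h => hβcol ew hew hewb (hewα.trans h)
      set R := KReach E c α β b0 with hR
      have hRA : ∀ a : A, R (Sum.inl a) →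
          ∃ b, (a, b) ∈ E ∧ c (a, b) = α ∧ R (Sum.inr b) := by
        intro a h
        cases h with
        | stepA h hm hc => exact ⟨_, hm, hc, h⟩
      have hRB : ∀ b : B, R (Sum.inr b) →
          b = b0 ∨ ∃ a, (a, b) ∈ E ∧ c (a, b) = β ∧ R (Sum.inl a) := by
        intro b h
        cases h with
        | base => exact Or.inl rfl
        | stepB h hm hc => exact Or.inr ⟨_, hm, hc, h⟩
      set c' : A × B → ℕ := fun e =>
        if c e = α ∧ R (Sum.inr e.2) then β
        else if c e = β ∧ R (Sum.inl e.1) then α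
        else c e with hc'
      -- key transfer lemmas
      have key1 : ∀ e₁ ∈ E, ∀ e₂ ∈ E, (e₁.1 = e₂.1 ∨ e₁.2 = e₂.2) →
          c e₁ = α → R (Sum.inr e₁.2) → c e₂ = β → R (Sum.inl e₂.1) := by
        intro e₁ he₁ e₂ he₂ hsh h1 h2 h3
        rcases hsh with h | h
        · rw [← h]
          exact KReach.stepA h2 he₁ h1
        · rcases hRB e₁.2 h2 with hb | ⟨a', hm', hc', hr'⟩
          · exact absurd h3 (hβcol e₂ he₂ (h ▸ hb))
          · have : (a', e₁.2) = e₂ := huniq _ hm' _ he₂ (Or.inr h) (hc'.trans h3.symm)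
            rw [← this]
            exact hr'
      have key2 : ∀ e₁ ∈ E, ∀ e₂ ∈ E, (e₁.1 = e₂.1 ∨ e₁.2 = e₂.2) →
          c e₁ = β → R (Sum.inl e₁.1) → c e₂ = α → R (Sum.inr e₂.2) := by
        intro e₁ he₁ e₂ he₂ hsh h1 h2 h3
        rcases hsh with h | h
        · obtain ⟨b', hm', hc', hr'⟩ := hRA e₁.1 h2
          have : (e₁.1, b') = e₂ := huniq _ hm' _ he₂ (Or.inl h) (hc'.trans h3.symm)
          rw [← this]
          exact hr'
        · rw [← h]
          exact KReach.stepB h2 he₁ h1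
      have hproper' : ∀ e₁ ∈ E, ∀ e₂ ∈ E, e₁ ≠ e₂ → (e₁.1 = e₂.1 ∨ e₁.2 = e₂.2) →
          c' e₁ ≠ c' e₂ := by
        intro e₁ he₁ e₂ he₂ hne hsh
        simp only [hc']
        by_cases h1 : c e₁ = α ∧ R (Sum.inr e₁.2) <;>
          by_cases h2 : c e₂ = α ∧ R (Sum.inr e₂.2)
        · exact absurd (huniq e₁ he₁ e₂ he₂ hsh (h1.1.trans h2.1.symm)) hne
        · rw [if_pos h1, if_neg h2]
          by_cases h3 : c e₂ = β ∧ R (Sum.inl e₂.1)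
          · rw [if_pos h3]; exact Ne.symm hαβ
          · rw [if_neg h3]
            intro hc
            exact h3 ⟨hc.symm, key1 e₁ he₁ e₂ he₂ hsh h1.1 h1.2 hc.symm⟩
        · rw [if_neg h1, if_pos h2]
          by_cases h3 : c e₁ = β ∧ R (Sum.inl e₁.1)
          · rw [if_pos h3]; exact hαβ
          · rw [if_neg h3]
            intro hc
            exact h3 ⟨hc, key1 e₂ he₂ e₁ he₁ (hsh.imp Eq.symm Eq.symm) h2.1 h2.2 hc⟩
        · rw [if_neg h1, if_neg h2]
          by_cases h3 : c e₁ = β ∧ R (Sum.inl e₁.1) <;>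
            by_cases h4 : c e₂ = β ∧ R (Sum.inl e₂.1)
          · exact absurd (huniq e₁ he₁ e₂ he₂ hsh (h3.1.trans h4.1.symm)) hne
          · rw [if_pos h3, if_neg h4]
            intro hc
            exact h2 ⟨hc.symm, key2 e₁ he₁ e₂ he₂ hsh h3.1 h3.2 hc.symm⟩
          · rw [if_neg h3, if_pos h4]
            intro hc
            exact h1 ⟨hc, key2 e₂ he₂ e₁ he₁ (hsh.imp Eq.symm Eq.symm) h4.1 h4.2 hc⟩
          · rw [if_neg h3, if_neg h4]
            exact hproper e₁ he₁ e₂ he₂ hne hsh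
      -- α is free at row a0 and column b0 for c'
      have hα'row : ∀ e ∈ E, e.1 = a0 → c' e ≠ α := by
        intro e he h1
        simp only [hc']
        by_cases h2 : c e = α ∧ R (Sum.inr e.2)
        · rw [if_pos h2]; exact Ne.symm hαβ
        · rw [if_neg h2]
          by_cases h3 : c e = β ∧ R (Sum.inl e.1)
          · exfalso
            obtain ⟨b', hm', hc', _⟩ := hRA e.1 h3.2
            exact hαrow (e.1, b') hm' h1 hc'
          · rw [if_neg h3]
            exact hαrow e he h1
      have hα'col : ∀ e ∈ E, e.2 = b0 → c' e ≠ α := by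
        intro e he h1
        simp only [hc']
        by_cases h2 : c e = α ∧ R (Sum.inr e.2)
        · rw [if_pos h2]; exact Ne.symm hαβ
        · rw [if_neg h2]
          by_cases h3 : c e = β ∧ R (Sum.inl e.1)
          · exact absurd h3.1 (hβcol e he h1)
          · rw [if_neg h3]
            intro hc
            exact h2 ⟨hc, h1 ▸ KReach.base⟩
      have hc'lt : ∀ e ∈ E, c' e < k := by
        intro e he
        simp only [hc']
        split_ifs
        · exact hβk
        · exact hαk
        · exact hlt e he
      refine ⟨fun e => if e = (a0, b0) then α else c' e, ?_, ?_⟩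
      · intro e he
        dsimp only
        rcases mem_insert.mp he with rfl | he
        · simp [hαk]
        · rw [if_neg (show ¬(e = (a0, b0)) from fun h => hnotmem (h ▸ he))]
          exact hc'lt e he
      · intro e₁ he₁ e₂ he₂ hne hsh
        dsimp only
        rcases mem_insert.mp he₁ with rfl | he₁ <;> rcases mem_insert.mp he₂ with rfl | he₂
        · exact absurd rfl hne
        · rw [if_pos rfl, if_neg (show ¬(e₂ = (a0, b0)) from fun h => hnotmem (h ▸ he₂))]
          rcases hsh with h | h
          · exact fun hc => hα'row e₂ he₂ h.symm hc.symm
          · exact fun hc => hα'col e₂ he₂ h.symm hc.symm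
        · rw [if_pos rfl, if_neg (show ¬(e₁ = (a0, b0)) from fun h => hnotmem (h ▸ he₁))]
          rcases hsh with h | h
          · exact fun hc => hα'row e₁ he₁ h hc
          · exact fun hc => hα'col e₁ he₁ h hc
        · rw [if_neg (show ¬(e₁ = (a0, b0)) from fun h => hnotmem (h ▸ he₁)), if_neg (show ¬(e₂ = (a0, b0)) from fun h => hnotmem (h ▸ he₂))]
          exact hproper' e₁ he₁ e₂ he₂ hne hsh

/-- A proper edge coloring of a simple graph: distinct edges sharing an endpoint
get different colors. -/
def IsProperEdgeColoring {V α : Type*} (G : SimpleGraph V) (c : G.edgeSet → α) : Prop :=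
  ∀ e₁ e₂ : G.edgeSet, e₁ ≠ e₂ →
    (∃ v, v ∈ (e₁ : Sym2 V) ∧ v ∈ (e₂ : Sym2 V)) → c e₁ ≠ c e₂

/-- König's theorem: a bipartite simple graph with all degrees at most `k`
has a proper edge coloring with `k` colors. -/
theorem konig_edge_coloring {V : Type*} [Fintype V] (G : SimpleGraph V)
    [DecidableRel G.Adj] {k : ℕ}
    (hbip : ∃ P : V → Bool, ∀ u v, G.Adj u v → P u ≠ P v)
    (hdeg : ∀ v, G.degree v ≤ k) :
    ∃ c : G.edgeSet → Fin k, IsProperEdgeColoring G c := by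
  classical
  obtain ⟨P, hP⟩ := hbip
  set E : Finset (V × V) :=
    Finset.univ.filter (fun p : V × V => G.Adj p.1 p.2 ∧ P p.1 = true) with hE
  have hmemE : ∀ p : V × V, p ∈ E ↔ G.Adj p.1 p.2 ∧ P p.1 = true := by
    intro p; simp [hE]
  have hrow : ∀ a, (E.filter (fun p => p.1 = a)).card ≤ k := by
    intro a
    have h1 : (E.filter (fun p => p.1 = a)).card ≤ (G.neighborFinset a).card := by
      apply Finset.card_le_card_of_injOn (fun p => p.2)
      · intro p hp
        rw [Finset.mem_coe, Finset.mem_filter] at hp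
        obtain ⟨hpE, hpa⟩ := hp
        rw [hmemE] at hpE
        rw [Finset.mem_coe, SimpleGraph.mem_neighborFinset, ← hpa]
        exact hpE.1
      · intro p hp q hq hpq
        simp only [Finset.mem_coe, Finset.mem_filter] at hp hq
        exact Prod.ext (hp.2.trans hq.2.symm) hpq
    exact h1.trans (by rw [SimpleGraph.card_neighborFinset_eq_degree]; exact hdeg a)
  have hcol : ∀ b, (E.filter (fun p => p.2 = b)).card ≤ k := by
    intro b
    have h1 : (E.filter (fun p => p.2 = b)).card ≤ (G.neighborFinset b).card := by
      apply Finset.card_le_card_of_injOn (fun p => p.1)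
      · intro p hp
        rw [Finset.mem_coe, Finset.mem_filter] at hp
        obtain ⟨hpE, hpb⟩ := hp
        rw [hmemE] at hpE
        rw [Finset.mem_coe, SimpleGraph.mem_neighborFinset, ← hpb]
        exact hpE.1.symm
      · intro p hp q hq hpq
        simp only [Finset.mem_coe, Finset.mem_filter] at hp hq
        exact Prod.ext hpq (hp.2.trans hq.2.symm)
    exact h1.trans (by rw [SimpleGraph.card_neighborFinset_eq_degree]; exact hdeg b)
  obtain ⟨c, hlt, hproper⟩ := abstract_konig E hrow hcol
  -- symmetric function giving the color of an edge
  set f : V → V → ℕ := fun u v =>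
    if P u = true ∧ P v = false then c (u, v)
    else if P v = true ∧ P u = false then c (v, u) else 0 with hf
  have hfsymm : ∀ u v, f u v = f v u := by
    intro u v
    simp only [hf]
    by_cases h1 : P u = true <;> by_cases h2 : P v = true <;>
      simp [h1, h2, Bool.not_eq_true] at * <;> simp [h1, h2]
  set g : Sym2 V → ℕ := Sym2.lift ⟨f, hfsymm⟩ with hg
  -- every edge has a canonical orientation
  have horient : ∀ e : Sym2 V, e ∈ G.edgeSet → ∃ p : V × V, p ∈ E ∧ e = s(p.1, p.2) ∧
      g e = c p ∧ P p.1 = true ∧ P p.2 = false := by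
    intro e
    refine Sym2.ind (fun u v he => ?_) e
    rw [SimpleGraph.mem_edgeSet] at he
    have hne := hP u v he
    by_cases hu : P u = true
    · have hv : P v = false := by
        cases hPv : P v
        · rfl
        · exact absurd (hu.trans hPv.symm) hne
      refine ⟨(u, v), (hmemE _).mpr ⟨he, hu⟩, rfl, ?_, hu, hv⟩
      show f u v = c (u, v)
      rw [hf]
      simp [hu, hv]
    · have hu' : P u = false := by
        cases hPu : P u
        · rfl
        · exact absurd hPu hu
      have hv : P v = true := by
        cases hPv : P v
        · exact absurd (hu'.trans hPv.symm) hne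
        · rfl
      refine ⟨(v, u), (hmemE _).mpr ⟨he.symm, hv⟩, Sym2.eq_swap, ?_, hv, hu'⟩
      show f u v = c (v, u)
      rw [hf]
      simp [hu', hv]
  have hbound : ∀ e : G.edgeSet, g e.1 < k := by
    rintro ⟨e, he⟩
    obtain ⟨p, hpE, _, hgc, _, _⟩ := horient e he
    rw [hgc]
    exact hlt p hpE
  refine ⟨fun e => ⟨g e.1, hbound e⟩, ?_⟩
  rintro ⟨e₁, he₁⟩ ⟨e₂, he₂⟩ hne ⟨w, hw1, hw2⟩
  obtain ⟨p₁, hp₁E, hp₁e, hg₁, hp₁t, hp₁f⟩ := horient e₁ he₁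
  obtain ⟨p₂, hp₂E, hp₂e, hg₂, hp₂t, hp₂f⟩ := horient e₂ he₂
  have hpne : p₁ ≠ p₂ := by
    rintro rfl
    exact hne (Subtype.ext (hp₁e.trans hp₂e.symm))
  have hsh : p₁.1 = p₂.1 ∨ p₁.2 = p₂.2 := by
    simp only [hp₁e, Sym2.mem_iff] at hw1
    simp only [hp₂e, Sym2.mem_iff] at hw2
    rcases hw1 with h1 | h1 <;> rcases hw2 with h2 | h2
    · exact Or.inl (h1.symm.trans h2)
    · exfalso
      rw [← h1] at hp₁t
      rw [← h2] at hp₂f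
      exact absurd (hp₁t.symm.trans hp₂f) (by simp)
    · exfalso
      rw [← h1] at hp₁f
      rw [← h2] at hp₂t
      exact absurd (hp₂t.symm.trans hp₁f) (by simp)
    · exact Or.inr (h1.symm.trans h2)
  intro hceq
  have : g e₁ = g e₂ := congrArg Fin.val hceq
  rw [hg₁, hg₂] at this
  exact hproper p₁ hp₁E p₂ hp₂E hpne hsh this
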